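/- If T is a 𝒞^w-collection, λ ∈ T with λ ≤ β̄_l and λ ≡ β_l (mod e_{l-1}), then λ + β̄_k − β̄_l ∈ T for every l < k ≤ g. -/
import Mathlib


/-- If `T` is a `𝒞^w`-collection, `λ ∈ T` with `λ ≤ β̄_l` and `λ ≡ β_l (mod e_{l−1})`,
then `λ + β̄_k − β̄_l ∈ T` for every `l < k ≤ g`. -/
theorem cw_collection_multistep (n g : ℕ) (hn : 2 ≤ n) (hg : 1 ≤ g)
    (β e nn bb : ℕ → ℕ)
    (he0 : e 0 = n)
    (he : ∀ j, 1 ≤ j → j ≤ g → e j = Nat.gcd (e (j - 1)) (β j))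
    (heg : e g = 1)
    (hβmono : ∀ j, 1 ≤ j → j < g → β j < β (j + 1))
    (hchar : ∀ j, 1 ≤ j → j ≤ g → ¬ e (j - 1) ∣ β j)
    (hβ1 : n < β 1)
    (hnn : ∀ j, 1 ≤ j → j ≤ g → nn j = e (j - 1) / e j)
    (hbb1 : bb 1 = β 1)
    (hbb : ∀ j, 2 ≤ j → j ≤ g → bb j = nn (j - 1) * bb (j - 1) - β (j - 1) + β j)
    (S₀ : Set ℕ)
    (hS₀ : S₀ = (AddSubmonoid.closure ({n} ∪ bb '' Set.Icc 1 g) : AddSubmonoid ℕ))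
    (T : Set ℕ)
    (hTpos : ∀ m ∈ T, 0 < m)
    (hTS : ∀ m ∈ T, ∀ s ∈ S₀, m + s ∈ T)
    (hstep : ∀ lam ∈ T, ∀ l, 1 ≤ l → l < g → lam ≤ bb l →
      lam % e (l - 1) = β l % e (l - 1) → lam + bb (l + 1) - bb l ∈ T) :
    ∀ lam ∈ T, ∀ l k, 1 ≤ l → l < k → k ≤ g → lam ≤ bb l →
      lam % e (l - 1) = β l % e (l - 1) → lam + bb k - bb l ∈ T := by
  -- positivity of e
  have epos : ∀ j, j ≤ g → 0 < e j := by
    intro j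
    induction j with
    | zero => intro _; rw [he0]; omega
    | succ i ih =>
        intro hj
        rw [he (i + 1) (by omega) hj]
        simp only [Nat.add_sub_cancel]
        exact Nat.gcd_pos_of_pos_left _ (ih (by omega))
  have edvd : ∀ j, 1 ≤ j → j ≤ g → e j ∣ e (j - 1) := by
    intro j h1 h2; rw [he j h1 h2]; exact Nat.gcd_dvd_left _ _
  have eβ : ∀ j, 1 ≤ j → j ≤ g → e j ∣ β j := by
    intro j h1 h2; rw [he j h1 h2]; exact Nat.gcd_dvd_right _ _
  -- nn j ≥ 2 and e (j-1) = nn j * e j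
  have nn2 : ∀ j, 1 ≤ j → j ≤ g → e (j - 1) = nn j * e j ∧ 2 ≤ nn j := by
    intro j h1 h2
    have hd := edvd j h1 h2
    have hne : e j ≠ e (j - 1) := by
      intro hcontra
      exact hchar j h1 h2 (hcontra ▸ eβ j h1 h2)
    have hlt : e j < e (j - 1) :=
      lt_of_le_of_ne (Nat.le_of_dvd (epos (j - 1) (by omega)) hd) hne
    have heq : e (j - 1) = nn j * e j := by
      rw [hnn j h1 h2, Nat.div_mul_cancel hd]
    refine ⟨heq, ?_⟩
    have hej : 0 < e j := epos j h2
    by_contra hlt2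
    interval_cases h : nn j <;> omega
  -- key divisibilities about bb
  have Q : ∀ j, 1 ≤ j → j ≤ g →
      β j ≤ bb j ∧ e j ∣ bb j ∧ e (j - 1) ∣ (bb j - β j) := by
    intro j
    induction j with
    | zero => omega
    | succ i ih =>
        intro _ hjg
        rcases Nat.eq_zero_or_pos i with hi | hi
        · subst hi
          simp only [Nat.add_sub_cancel]
          exact ⟨hbb1.ge, hbb1 ▸ eβ 1 le_rfl hjg, by simp [hbb1]⟩
        · obtain ⟨h1, h2, _⟩ := ih hi (by omega)
          have hbbj : bb (i + 1) = nn i * bb i - β i + β (i + 1) := by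
            have := hbb (i + 1) (by omega) hjg
            simpa using this
          obtain ⟨_, hnn2⟩ := nn2 i hi (by omega)
          have hble : β i ≤ nn i * bb i :=
            le_trans h1 (Nat.le_mul_of_pos_left _ (by omega))
          have h3' : e i ∣ nn i * bb i - β i :=
            Nat.dvd_sub (h2.mul_left _) (eβ i hi (by omega))
          have hβle : β (i + 1) ≤ bb (i + 1) := by omega
          have hsub : bb (i + 1) - β (i + 1) = nn i * bb i - β i := by omega
          refine ⟨hβle, ?_, ?_⟩
          · have : e (i + 1) ∣ bb (i + 1) - β (i + 1) := by
              rw [hsub]; exact (edvd (i + 1) (by omega) hjg).trans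
                (by simpa using (dvd_refl (e i))) |>.trans h3' |> fun _ => 
                dvd_trans (by simpa using edvd (i + 1) (by omega) hjg) h3'
            have h4 : e (i + 1) ∣ β (i + 1) := eβ (i + 1) (by omega) hjg
            have := Nat.dvd_add this h4
            rwa [Nat.sub_add_cancel hβle] at this
          · simp only [Nat.add_sub_cancel]
            rw [hsub]; exact h3'
  -- growth of bb
  have bbgrow : ∀ j, 1 ≤ j → j < g → bb j + β (j + 1) ≤ bb (j + 1) := by
    intro j h1 h2
    have hbbj : bb (j + 1) = nn j * bb j - β j + β (j + 1) := by
      have := hbb (j + 1) (by omega) (by omega)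
      simpa using this
    obtain ⟨h1', _, _⟩ := Q j h1 (by omega)
    obtain ⟨_, hnn2⟩ := nn2 j h1 (by omega)
    have h2bb : 2 * bb j ≤ nn j * bb j := Nat.mul_le_mul_right _ hnn2
    omega
  intro lam hlam l k hl hlk hkg hle hmod
  have βpos : ∀ j, 1 ≤ j → j ≤ g → 0 < β (j + 1) ∨ True := fun _ _ _ => Or.inr trivial
  -- main induction
  have main : ∀ k', l ≤ k' → k' ≤ g →
      lam + (bb k' - bb l) ∈ T ∧ lam + (bb k' - bb l) ≤ bb k' ∧
      (lam + (bb k' - bb l)) % e (k' - 1) = β k' % e (k' - 1) ∧ bb l ≤ bb k' := by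
    intro k'
    induction k' with
    | zero => omega
    | succ i ih =>
        intro hlk' hkg'
        rcases eq_or_lt_of_le hlk' with heql | hlt
        · rw [← heql]
          simp only [Nat.sub_self, Nat.add_zero]
          exact ⟨hlam, hle, hmod, le_rfl⟩
        · obtain ⟨hT', hle', hmod', hmon'⟩ := ih (by omega) (by omega)
          have hi1 : 1 ≤ i := by omega
          have hig : i < g := by omega
          have hst := hstep _ hT' i hi1 hig hle' hmod'
          have hgr := bbgrow i hi1 hig
          have harith : lam + (bb i - bb l) + bb (i + 1) - bb i
              = lam + (bb (i + 1) - bb l) := by omega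
          rw [harith] at hst
          refine ⟨hst, by omega, ?_, by omega⟩
          -- congruence
          simp only [Nat.add_sub_cancel]
          obtain ⟨hb1, _, hb3⟩ := Q (i + 1) (by omega) hkg'
          simp only [Nat.add_sub_cancel] at hb3
          obtain ⟨_, hbi2, _⟩ := Q i hi1 (by omega)
          have heβi : e i ∣ β i := eβ i hi1 (by omega)
          have hmodi : lam + (bb i - bb l) ≡ β i [MOD e i] :=
            Nat.ModEq.of_dvd (edvd i hi1 (by omega)) hmod'
          have c1 : lam + (bb i - bb l) + bb (i + 1) ≡ β i + β (i + 1) [MOD e i] :=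
            hmodi.add ((Nat.modEq_iff_dvd' hb1).mpr hb3).symm
          have c2 : lam + (bb (i + 1) - bb l) + bb i ≡
              lam + (bb (i + 1) - bb l) + 0 [MOD e i] :=
            (Nat.ModEq.refl _).add ((Nat.modEq_zero_iff_dvd).mpr hbi2)
          have c3 : β i + β (i + 1) ≡ 0 + β (i + 1) [MOD e i] :=
            ((Nat.modEq_zero_iff_dvd).mpr heβi).add_right _
          have key : lam + (bb (i + 1) - bb l) ≡ β (i + 1) [MOD e i] := by
            calc lam + (bb (i + 1) - bb l)
                = lam + (bb (i + 1) - bb l) + 0 := by omega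
              _ ≡ lam + (bb (i + 1) - bb l) + bb i [MOD e i] := c2.symm
              _ = lam + (bb i - bb l) + bb (i + 1) := by omega
              _ ≡ β i + β (i + 1) [MOD e i] := c1
              _ ≡ 0 + β (i + 1) [MOD e i] := c3
              _ = β (i + 1) := by omega
          exact key
  obtain ⟨hT', _, _, hmon⟩ := main k (by omega) hkg
  have : lam + bb k - bb l = lam + (bb k - bb l) := by omega
  rwa [this]
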